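/- Suppose B ≥ 0 is such that p_Ψ(x) ≤ B for all x ∈ ℝⁿ, and let Ω ⊆ ℝⁿ be a bounded set with diameter at most D. Then sup_{x, y ∈ Ω} |d_λ(x, y) − ‖x − y‖| ≤ max(p₀, B) · D / λ; in particular, d_λ(x, y) converges to ‖x − y‖ as λ → ∞ uniformly over x, y ∈ Ω. -/

import Mathlib

open MeasureTheory Set Filter

/-- The conformal factor `f_λ(x) := (p₀ + λ)/(p_Ψ(x) + λ)`. -/
noncomputable def fconf {n : ℕ} (p₀ lam : ℝ) (pPsi : EuclideanSpace ℝ (Fin n) → ℝ)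
    (x : EuclideanSpace ℝ (Fin n)) : ℝ :=
  (p₀ + lam) / (pPsi x + lam)

/-- The generative length of a path `γ : [0,1] → ℝⁿ`,
`L_λ(γ) := ∫₀¹ f_λ(γ(t)) ⬝ ‖γ'(t)‖ dt`. -/
noncomputable def genLength {n : ℕ} (p₀ lam : ℝ) (pPsi : EuclideanSpace ℝ (Fin n) → ℝ)
    (γ : ℝ → EuclideanSpace ℝ (Fin n)) : ℝ :=
  ∫ t in (0:ℝ)..1, fconf p₀ lam pPsi (γ t) * ‖deriv γ t‖

/-- The generative distance `d_λ(x,y)`: the infimum of `L_λ(γ)` over all C¹ paths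
`γ` with `γ 0 = x` and `γ 1 = y`. -/
noncomputable def genDist {n : ℕ} (p₀ lam : ℝ) (pPsi : EuclideanSpace ℝ (Fin n) → ℝ)
    (x y : EuclideanSpace ℝ (Fin n)) : ℝ :=
  sInf {L : ℝ | ∃ γ : ℝ → EuclideanSpace ℝ (Fin n),
    ContDiff ℝ 1 γ ∧ γ 0 = x ∧ γ 1 = y ∧ genLength p₀ lam pPsi γ = L}

section Aux

variable {n : ℕ} (p₀ lam : ℝ) (pPsi : EuclideanSpace ℝ (Fin n) → ℝ)

lemma denom_pos (hnonneg : ∀ x, 0 ≤ pPsi x) (hlam : 0 < lam) (z : EuclideanSpace ℝ (Fin n)) :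
    0 < pPsi z + lam := by linarith [hnonneg z]

lemma integrand_cont (hcont : Continuous pPsi) (hnonneg : ∀ x, 0 ≤ pPsi x) (hlam : 0 < lam)
    {γ : ℝ → EuclideanSpace ℝ (Fin n)} (hγ : ContDiff ℝ 1 γ) :
    Continuous (fun t => fconf p₀ lam pPsi (γ t) * ‖deriv γ t‖) := by
  have hd : Continuous (deriv γ) := hγ.continuous_deriv le_rfl
  have : Continuous (fun t => fconf p₀ lam pPsi (γ t)) := by
    apply continuous_const.div ((hcont.comp hγ.continuous).add continuous_const)
    intro t; exact (denom_pos lam pPsi hnonneg hlam (γ t)).ne'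
  exact this.mul hd.norm

lemma genLength_lower (hcont : Continuous pPsi) (hnonneg : ∀ x, 0 ≤ pPsi x)
    (B : ℝ) (hbd : ∀ x, pPsi x ≤ B) (hp₀ : 0 < p₀) (hlam : 0 < lam)
    {γ : ℝ → EuclideanSpace ℝ (Fin n)} (hγ : ContDiff ℝ 1 γ) :
    (p₀ + lam) / (B + lam) * ‖γ 1 - γ 0‖ ≤ genLength p₀ lam pPsi γ := by
  have hd : Continuous (deriv γ) := hγ.continuous_deriv le_rfl
  have h1 : ‖γ 1 - γ 0‖ ≤ ∫ t in (0:ℝ)..1, ‖deriv γ t‖ := by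
    have heq : γ 1 - γ 0 = ∫ t in (0:ℝ)..1, deriv γ t :=
      (intervalIntegral.integral_deriv_eq_sub (fun t _ => hγ.differentiable one_ne_zero t)
        (hd.intervalIntegrable 0 1)).symm
    rw [heq]
    exact intervalIntegral.norm_integral_le_integral_norm zero_le_one
  set c := (p₀ + lam) / (B + lam) with hc
  have hB : 0 ≤ B := le_trans (hnonneg 0) (hbd 0)
  have hc0 : 0 ≤ c := div_nonneg (by linarith) (by linarith)
  have h2 : ∫ t in (0:ℝ)..1, c * ‖deriv γ t‖ ≤ genLength p₀ lam pPsi γ := by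
    apply intervalIntegral.integral_mono_on zero_le_one
      ((continuous_const.mul hd.norm).intervalIntegrable 0 1)
      ((integrand_cont p₀ lam pPsi hcont hnonneg hlam hγ).intervalIntegrable 0 1)
    intro t _
    apply mul_le_mul_of_nonneg_right _ (norm_nonneg _)
    simp only [fconf]
    apply div_le_div_of_nonneg_left (by positivity) (denom_pos lam pPsi hnonneg hlam _)
    linarith [hbd (γ t)]
  calc c * ‖γ 1 - γ 0‖ ≤ c * ∫ t in (0:ℝ)..1, ‖deriv γ t‖ :=
        mul_le_mul_of_nonneg_left h1 hc0
    _ = ∫ t in (0:ℝ)..1, c * ‖deriv γ t‖ := (intervalIntegral.integral_const_mul c _).symm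
    _ ≤ _ := h2

lemma straight_exists (hcont : Continuous pPsi) (hnonneg : ∀ x, 0 ≤ pPsi x)
    (hp₀ : 0 < p₀) (hlam : 0 < lam) (x y : EuclideanSpace ℝ (Fin n)) :
    ∃ γ : ℝ → EuclideanSpace ℝ (Fin n), ContDiff ℝ 1 γ ∧ γ 0 = x ∧ γ 1 = y ∧
      genLength p₀ lam pPsi γ ≤ (p₀ + lam) / lam * ‖x - y‖ := by
  refine ⟨fun t => x + t • (y - x), ?_, by simp, by simp, ?_⟩
  · exact contDiff_const.add (contDiff_id.smul contDiff_const)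
  · have hderiv : ∀ t : ℝ, deriv (fun t : ℝ => x + t • (y - x)) t = y - x := by
      intro t
      have h : HasDerivAt (fun t : ℝ => x + t • (y - x)) (y - x) t := by
        have := ((hasDerivAt_id t).smul_const (y - x)).const_add x
        simpa using this
      exact h.deriv
    have hcont2 : Continuous (fun t : ℝ => fconf p₀ lam pPsi (x + t • (y - x))) := by
      apply continuous_const.div ((hcont.comp (by continuity)).add continuous_const)
      intro t; exact (denom_pos lam pPsi hnonneg hlam _).ne'
    have h2 : genLength p₀ lam pPsi (fun t => x + t • (y - x))
        ≤ ∫ t in (0:ℝ)..1, (p₀ + lam) / lam * ‖y - x‖ := by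
      unfold genLength
      apply intervalIntegral.integral_mono_on zero_le_one
      · simp only [hderiv]
        exact (hcont2.mul continuous_const).intervalIntegrable 0 1
      · exact intervalIntegrable_const
      · intro t _
        rw [hderiv]
        apply mul_le_mul_of_nonneg_right _ (norm_nonneg _)
        rw [fconf]
        apply div_le_div_of_nonneg_left (by positivity) hlam
        linarith [hnonneg (x + t • (y - x))]
    calc genLength p₀ lam pPsi (fun t => x + t • (y - x))
        ≤ ∫ t in (0:ℝ)..1, (p₀ + lam) / lam * ‖y - x‖ := h2
      _ = (p₀ + lam) / lam * ‖x - y‖ := by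
          rw [intervalIntegral.integral_const, norm_sub_rev]; simp

end Aux

/-- if `p_Ψ ≤ B` and `Ω` is a bounded set of diameter at most `D`, then
`sup_{x,y ∈ Ω} |d_λ(x,y) − ‖x − y‖| ≤ max(p₀,B)⬝D/λ`; in particular `d_λ → ‖⬝‖`
uniformly over `Ω` as `λ → ∞`. -/
theorem genDist_tendsto_euclidean_uniform {n : ℕ} (hn : 1 ≤ n)
    (p₀ : ℝ) (hp₀ : 0 < p₀)
    (pPsi : EuclideanSpace ℝ (Fin n) → ℝ) (hcont : Continuous pPsi)
    (hnonneg : ∀ x, 0 ≤ pPsi x)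
    (B : ℝ) (hB : 0 ≤ B) (hbd : ∀ x, pPsi x ≤ B)
    (Ω : Set (EuclideanSpace ℝ (Fin n))) (hΩ : Bornology.IsBounded Ω)
    (D : ℝ) (hD : ∀ x ∈ Ω, ∀ y ∈ Ω, ‖x - y‖ ≤ D) :
    (∀ lam : ℝ, 0 < lam → ∀ x ∈ Ω, ∀ y ∈ Ω,
      |genDist p₀ lam pPsi x y - ‖x - y‖| ≤ max p₀ B * D / lam) ∧
    (∀ ε : ℝ, 0 < ε → ∃ Λ : ℝ, ∀ lam : ℝ, Λ ≤ lam → ∀ x ∈ Ω, ∀ y ∈ Ω,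
      |genDist p₀ lam pPsi x y - ‖x - y‖| < ε) := by
  have main : ∀ lam : ℝ, 0 < lam → ∀ x ∈ Ω, ∀ y ∈ Ω,
      |genDist p₀ lam pPsi x y - ‖x - y‖| ≤ max p₀ B * D / lam := by
    intro lam hlam x hx y hy
    set N := ‖x - y‖ with hN
    have hN0 : 0 ≤ N := norm_nonneg _
    have hND : N ≤ D := hD x hx y hy
    have hD0 : 0 ≤ D := le_trans hN0 hND
    set M := max p₀ B with hM
    have hM0 : 0 ≤ M := le_trans hB (le_max_right _ _)
    set S := {L : ℝ | ∃ γ : ℝ → EuclideanSpace ℝ (Fin n),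
      ContDiff ℝ 1 γ ∧ γ 0 = x ∧ γ 1 = y ∧ genLength p₀ lam pPsi γ = L} with hS
    obtain ⟨γ₀, hγ₀, h0, h1, hlen⟩ := straight_exists p₀ lam pPsi hcont hnonneg hp₀ hlam x y
    have hne : S.Nonempty := ⟨genLength p₀ lam pPsi γ₀, γ₀, hγ₀, h0, h1, rfl⟩
    have hlb : ∀ L ∈ S, (p₀ + lam) / (B + lam) * N ≤ L := by
      rintro L ⟨γ, hγ, hγ0, hγ1, rfl⟩
      have := genLength_lower p₀ lam pPsi hcont hnonneg B hbd hp₀ hlam hγ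
      rwa [hγ0, hγ1, norm_sub_rev] at this
    have hdlb : (p₀ + lam) / (B + lam) * N ≤ genDist p₀ lam pPsi x y :=
      le_csInf hne hlb
    have hdub : genDist p₀ lam pPsi x y ≤ (p₀ + lam) / lam * N := by
      apply le_trans (csInf_le ⟨_, hlb⟩ ⟨γ₀, hγ₀, h0, h1, rfl⟩) hlen
    rw [abs_le]
    constructor
    · -- N - M*D/lam ≤ d, via lower bound
      rw [neg_le, neg_sub]
      have hBl : (0:ℝ) < B + lam := by linarith
      have key : N - M * D / lam ≤ (p₀ + lam) / (B + lam) * N := by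
        rw [sub_le_iff_le_add, div_mul_eq_mul_div,
          div_add_div _ _ (ne_of_gt hBl) (ne_of_gt hlam),
          le_div_iff₀ (by positivity)]
        have h1 : B * N ≤ M * D :=
          mul_le_mul (le_max_right _ _) hND hN0 hM0
        nlinarith [mul_le_mul_of_nonneg_right h1 hlam.le,
          mul_nonneg (mul_nonneg hM0 hD0) hB,
          mul_nonneg (mul_nonneg hp₀.le hN0) hlam.le]
      linarith [le_trans key hdlb]
    · -- d - N ≤ M*D/lam, via upper bound
      have key : (p₀ + lam) / lam * N ≤ N + M * D / lam := by
        rw [div_mul_eq_mul_div, ← sub_le_iff_le_add', div_sub' (ne_of_gt hlam),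
          div_le_div_iff₀ hlam hlam]
        have h1 : p₀ * N ≤ M * D := mul_le_mul (le_max_left _ _) hND hN0 hM0
        nlinarith
      linarith [le_trans hdub key]
  refine ⟨main, ?_⟩
  intro ε hε
  refine ⟨max 1 (max p₀ B * D / ε + 1), fun lam hlam x hx y hy => ?_⟩
  have hlam1 : (1:ℝ) ≤ lam := le_trans (le_max_left _ _) hlam
  have hlampos : 0 < lam := lt_of_lt_of_le one_pos hlam1
  have hD0 : 0 ≤ D := by
    have := hD x hx x hx; simpa using this
  have hM0 : 0 ≤ max p₀ B := le_trans hB (le_max_right _ _)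
  have h := main lam hlampos x hx y hy
  refine lt_of_le_of_lt h ?_
  rw [div_lt_iff₀ hlampos]
  have h2 : max p₀ B * D / ε + 1 ≤ lam := le_trans (le_max_right _ _) hlam
  have h3 : max p₀ B * D ≤ (lam - 1) * ε := by
    rw [← div_le_iff₀ hε] at *
    linarith
  nlinarith
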